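/- Let f, g : F_2^m → F_2 with f(0) = g(0) = 0, neither f, g, nor f+g linear, and suppose that for F = {f, g, f+g} the following hold: (1) for all f₁, f₂ ∈ F and all distinct h, l ∈ F_2^m, f̂₁(h) + f̂₂(l) ≠ 2^m and f̂₁(h) − f̂₂(l) ≠ 2^m; (2) for all distinct f₁, f₂ ∈ F and all h, l ∈ F_2^m, f̂₁(l+h) + f̂₂(l) − (f₁+f₂)^(h) ≠ 2^m and f̂₁(l+h) + f̂₂(h) − (f₁+f₂)^(l) ≠ 2^m. Then every nonzero codeword of C_{f,g} = {(u f(x)+ r g(x)+ v·x)_{x≠0} : u,r ∈ F_2, v ∈ F_2^m} is minimal, i.e., covers no nonzero codeword other than itself. -/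
import Mathlib


open Finset

/-- Standard inner product on `F_2^m`. -/
def ip {m : ℕ} (w x : Fin m → ZMod 2) : ZMod 2 := ∑ i, w i * x i

/-- Signed Walsh transform `ĥ(w) = Σ_x (-1)^(h(x)+w·x)`. -/
def walshS {m : ℕ} (h : (Fin m → ZMod 2) → ZMod 2) (w : Fin m → ZMod 2) : ℤ :=
  ∑ x : Fin m → ZMod 2, (-1 : ℤ) ^ ((h x + ip w x).val)

/-- The code `C_{f,g}`, indexed by the nonzero elements of `F_2^m`. -/
def codeFG {m : ℕ} (f g : (Fin m → ZMod 2) → ZMod 2) :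
    Set ({x : Fin m → ZMod 2 // x ≠ 0} → ZMod 2) :=
  {c | ∃ u r : ZMod 2, ∃ v : Fin m → ZMod 2,
    c = fun x => u * f x.1 + r * g x.1 + ip v x.1}

lemma ip_zero_left {m : ℕ} (x : Fin m → ZMod 2) : ip 0 x = 0 := by simp [ip]
lemma ip_zero_right {m : ℕ} (w : Fin m → ZMod 2) : ip w 0 = 0 := by simp [ip]
lemma ip_add_left {m : ℕ} (v w x : Fin m → ZMod 2) : ip (v + w) x = ip v x + ip w x := by
  simp [ip, add_mul, Finset.sum_add_distrib]
lemma ip_add_right {m : ℕ} (w x y : Fin m → ZMod 2) : ip w (x + y) = ip w x + ip w y := by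
  simp [ip, mul_add, Finset.sum_add_distrib]
lemma ip_single {m : ℕ} (w : Fin m → ZMod 2) (i : Fin m) : ip w (Pi.single i 1) = w i := by
  simp [ip, Pi.single_apply, mul_ite]

lemma walsh_card {m : ℕ} (h : (Fin m → ZMod 2) → ZMod 2) (v : Fin m → ZMod 2) :
    walshS h v = 2 ^ m - 2 * ((univ.filter (fun x => h x + ip v x = 1)).card : ℤ) := by
  have hpt : ∀ a : ZMod 2, ((-1 : ℤ)) ^ a.val = if a = 1 then -1 else 1 := by decide
  have hcard : (univ.filter (fun x => h x + ip v x = 1)).card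
      + (univ.filter (fun x => ¬(h x + ip v x = 1))).card = 2 ^ m := by
    rw [Finset.card_filter_add_card_filter_not]
    simp [Finset.card_univ]
  unfold walshS
  rw [Finset.sum_congr rfl (fun x _ => hpt _), Finset.sum_ite, Finset.sum_const,
    Finset.sum_const]
  simp only [nsmul_eq_mul, mul_one, mul_neg]
  have := hcard
  push_cast at this ⊢
  linarith

lemma walsh_zero {m : ℕ} (w : Fin m → ZMod 2) (hw : w ≠ 0) :
    walshS (0 : (Fin m → ZMod 2) → ZMod 2) w = 0 := by
  have zne : ∀ a : ZMod 2, a ≠ 0 → a = 1 := by decide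
  obtain ⟨i, hi⟩ : ∃ i, w i ≠ 0 := by
    by_contra hh; push_neg at hh; exact hw (funext hh)
  have hwi : w i = 1 := zne _ hi
  have hflip : ∀ a : ZMod 2, (-1 : ℤ) ^ ((a + 1).val) = -((-1 : ℤ) ^ a.val) := by decide
  have hre : walshS (0 : (Fin m → ZMod 2) → ZMod 2) w
      = ∑ x : Fin m → ZMod 2, (-1 : ℤ) ^ ((ip w (x + Pi.single i 1)).val) := by
    have := Equiv.sum_comp (Equiv.addRight (Pi.single i (1 : ZMod 2)))
      (fun y : Fin m → ZMod 2 => (-1 : ℤ) ^ ((ip w y).val))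
    simp only [Equiv.coe_addRight] at this
    rw [walshS]
    simp only [Pi.zero_apply, zero_add]
    exact this.symm
  have hre2 : ∑ x : Fin m → ZMod 2, (-1 : ℤ) ^ ((ip w (x + Pi.single i 1)).val)
      = -walshS (0 : (Fin m → ZMod 2) → ZMod 2) w := by
    rw [walshS, ← Finset.sum_neg_distrib]
    refine Finset.sum_congr rfl fun x _ => ?_
    rw [ip_add_right, ip_single, hwi, hflip]
    simp
  have := hre.trans hre2
  linarith

lemma key {m : ℕ} (h₁ h₂ h₃ : (Fin m → ZMod 2) → ZMod 2) (v₁ v₂ : Fin m → ZMod 2)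
    (h10 : h₁ 0 = 0) (h20 : h₂ 0 = 0)
    (h3d : ∀ x, h₃ x = h₁ x + h₂ x)
    (hs : ∀ x, x ≠ 0 → h₂ x + ip v₂ x ≠ 0 → h₁ x + ip v₁ x ≠ 0) :
    walshS h₂ v₂ + walshS h₃ (v₁ + v₂) - walshS h₁ v₁ = 2 ^ m := by
  have zne : ∀ a : ZMod 2, a ≠ 0 → a = 1 := by decide
  have zl1 : ∀ a b : ZMod 2, (b = 1 → a = 1) → (a = 1 ↔ (b = 1 ∨ a + b = 1)) := by decide
  have zl2 : ∀ a b : ZMod 2, (b = 1 → a = 1) → ¬(b = 1 ∧ a + b = 1) := by decide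
  have hs' : ∀ x, h₂ x + ip v₂ x = 1 → h₁ x + ip v₁ x = 1 := by
    intro x hx
    rcases eq_or_ne x 0 with rfl | hx0
    · rw [h20, ip_zero_right] at hx; exact absurd hx (by decide)
    · exact zne _ (hs x hx0 (by rw [hx]; exact one_ne_zero))
  have h3x : ∀ x, h₃ x + ip (v₁ + v₂) x = (h₁ x + ip v₁ x) + (h₂ x + ip v₂ x) := by
    intro x; rw [h3d, ip_add_left]; ring
  have hset : univ.filter (fun x => h₁ x + ip v₁ x = 1)
      = univ.filter (fun x => h₂ x + ip v₂ x = 1)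
        ∪ univ.filter (fun x => h₃ x + ip (v₁ + v₂) x = 1) := by
    rw [← Finset.filter_or]
    refine Finset.filter_congr fun x _ => ?_
    rw [h3x x]
    have := zl1 _ _ (hs' x)
    constructor
    · intro h; rcases (this.1 h) with h' | h'
      · exact Or.inl h'
      · exact Or.inr (by rw [add_comm] at h' ⊢; linear_combination h')
    · intro h; refine this.2 ?_
      rcases h with h' | h'
      · exact Or.inl h'
      · exact Or.inr (by linear_combination h')
  have hdisj : Disjoint (univ.filter (fun x => h₂ x + ip v₂ x = 1))
      (univ.filter (fun x => h₃ x + ip (v₁ + v₂) x = 1)) := by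
    rw [Finset.disjoint_left]
    intro x hx hx'
    simp only [Finset.mem_filter, Finset.mem_univ, true_and] at hx hx'
    rw [h3x x] at hx'
    exact zl2 _ _ (hs' x) ⟨hx, by linear_combination hx'⟩
  have hcards : (univ.filter (fun x => h₁ x + ip v₁ x = 1)).card
      = (univ.filter (fun x => h₂ x + ip v₂ x = 1)).card
        + (univ.filter (fun x => h₃ x + ip (v₁ + v₂) x = 1)).card := by
    rw [hset, Finset.card_union_of_disjoint hdisj]
  rw [walsh_card, walsh_card, walsh_card]
  push_cast [hcards]
  ring

lemma vlin {m : ℕ} (v : Fin m → ZMod 2) (h : ∃ x, ip v x ≠ 0) : v ≠ 0 := by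
  obtain ⟨x, hx⟩ := h
  rintro rfl
  exact hx (ip_zero_left x)

lemma core {m : ℕ} (f g : (Fin m → ZMod 2) → ZMod 2)
    (hfne : f ≠ 0) (hgne : g ≠ 0) (hfgne : f + g ≠ 0)
    (hcond1 : ∀ f₁ ∈ ({f, g, f + g} : Set ((Fin m → ZMod 2) → ZMod 2)),
      ∀ f₂ ∈ ({f, g, f + g} : Set ((Fin m → ZMod 2) → ZMod 2)),
      ∀ h l : Fin m → ZMod 2, h ≠ l →
        walshS f₁ h + walshS f₂ l ≠ 2 ^ m ∧ walshS f₁ h - walshS f₂ l ≠ 2 ^ m)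
    (hcond2 : ∀ f₁ ∈ ({f, g, f + g} : Set ((Fin m → ZMod 2) → ZMod 2)),
      ∀ f₂ ∈ ({f, g, f + g} : Set ((Fin m → ZMod 2) → ZMod 2)), f₁ ≠ f₂ →
      ∀ h l : Fin m → ZMod 2,
        walshS f₁ (l + h) + walshS f₂ l - walshS (f₁ + f₂) h ≠ 2 ^ m ∧
        walshS f₁ (l + h) + walshS f₂ h - walshS (f₁ + f₂) l ≠ 2 ^ m)
    (h₁ h₂ h₃ : (Fin m → ZMod 2) → ZMod 2) (v₁ v₂ : Fin m → ZMod 2)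
    (H₁ : h₁ = 0 ∨ h₁ ∈ ({f, g, f + g} : Set ((Fin m → ZMod 2) → ZMod 2)))
    (H₂ : h₂ = 0 ∨ h₂ ∈ ({f, g, f + g} : Set ((Fin m → ZMod 2) → ZMod 2)))
    (H₃ : h₃ = 0 ∨ h₃ ∈ ({f, g, f + g} : Set ((Fin m → ZMod 2) → ZMod 2)))
    (h₁0 : h₁ 0 = 0) (h₂0 : h₂ 0 = 0)
    (h3d : ∀ x, h₃ x = h₁ x + h₂ x)
    (hc1 : ∃ x, h₁ x + ip v₁ x ≠ 0)
    (hc2 : ∃ x, h₂ x + ip v₂ x ≠ 0)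
    (hc12 : ∃ x, h₂ x + ip v₂ x ≠ h₁ x + ip v₁ x)
    (hs : ∀ x, x ≠ 0 → h₂ x + ip v₂ x ≠ 0 → h₁ x + ip v₁ x ≠ 0) : False := by
  have zcancel : ∀ a b : ZMod 2, a + b = 0 → b = a := by decide
  have zaa : ∀ a : ZMod 2, a + a = 0 := by decide
  have hmemne : ∀ φ, φ ∈ ({f, g, f + g} : Set ((Fin m → ZMod 2) → ZMod 2)) →
      φ ≠ (0 : (Fin m → ZMod 2) → ZMod 2) := by
    intro φ hφ
    simp only [Set.mem_insert_iff, Set.mem_singleton_iff] at hφ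
    rcases hφ with rfl | rfl | rfl
    exacts [hfne, hgne, hfgne]
  have E := key h₁ h₂ h₃ v₁ v₂ h₁0 h₂0 h3d hs
  have hc3 : ∃ x, h₃ x + ip (v₁ + v₂) x ≠ 0 := by
    obtain ⟨x, hx⟩ := hc12
    refine ⟨x, fun h => hx ?_⟩
    rw [h3d, ip_add_left] at h
    exact zcancel _ _ (by linear_combination h)
  have hpos : (0 : ℤ) < 2 ^ m := by positivity
  rcases H₁ with rfl | hm1
  · have hv1 : v₁ ≠ 0 := vlin v₁ (by simpa using hc1)
    have hW1 : walshS (0 : (Fin m → ZMod 2) → ZMod 2) v₁ = 0 := walsh_zero v₁ hv1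
    rcases H₂ with rfl | hm2
    · have h₃0 : h₃ = 0 := funext fun x => by simpa using h3d x
      subst h₃0
      have hv12 : v₁ + v₂ ≠ 0 := vlin _ (by simpa using hc3)
      have hv2 : v₂ ≠ 0 := vlin _ (by simpa using hc2)
      rw [walsh_zero v₂ hv2, walsh_zero _ hv12, hW1] at E
      simp at E
      linarith
    · have h₃e : h₃ = h₂ := funext fun x => by simpa using h3d x
      rw [h₃e, hW1] at E
      have hne : v₂ ≠ v₁ + v₂ := by
        intro hh
        exact hv1 (by
          have : v₁ + v₂ = 0 + v₂ := by rw [zero_add]; exact hh.symm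
          exact add_right_cancel this)
      exact (hcond1 h₂ hm2 h₂ hm2 v₂ (v₁ + v₂) hne).1 (by linarith)
  · rcases H₂ with rfl | hm2
    · have hv2 : v₂ ≠ 0 := vlin _ (by simpa using hc2)
      have h₃e : h₃ = h₁ := funext fun x => by simpa using h3d x
      rw [h₃e, walsh_zero v₂ hv2] at E
      have hne : v₁ + v₂ ≠ v₁ := by
        intro hh
        exact hv2 (by
          have : v₁ + v₂ = v₁ + 0 := by rw [add_zero]; exact hh
          exact add_left_cancel this)
      exact (hcond1 h₁ hm1 h₁ hm1 (v₁ + v₂) v₁ hne).2 (by linarith)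
    · by_cases heq : h₁ = h₂
      · subst heq
        have h₃0 : h₃ = 0 := funext fun x => by rw [h3d, zaa]; rfl
        rw [h₃0] at E hc3
        have hv12 : v₁ + v₂ ≠ 0 := vlin _ (by simpa using hc3)
        rw [walsh_zero _ hv12] at E
        have hne : v₂ ≠ v₁ := by
          rintro rfl
          exact hv12 (funext fun i => zaa _)
        exact (hcond1 h₁ hm1 h₁ hm1 v₂ v₁ hne).2 (by linarith)
      · have h₃m : h₃ ∈ ({f, g, f + g} : Set ((Fin m → ZMod 2) → ZMod 2)) := by
          refine H₃.resolve_left fun h => heq (funext fun x => ?_)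
          have := h3d x
          rw [h, Pi.zero_apply] at this
          exact (zcancel _ _ this.symm).symm
        have h₁ne0 : h₁ ≠ 0 := hmemne h₁ hm1
        have h23 : h₂ ≠ h₃ := by
          intro h
          refine h₁ne0 (funext fun x => ?_)
          have := h3d x
          rw [← h] at this
          have : h₁ x + h₂ x = 0 + h₂ x := by rw [zero_add]; exact this.symm
          exact add_right_cancel this
        have hsum : h₂ + h₃ = h₁ := by
          funext x
          rw [Pi.add_apply, h3d x]
          linear_combination (zaa (h₂ x) : (h₂ x + h₂ x : ZMod 2) = 0)
        have hv : (v₁ + v₂) + v₁ = v₂ := by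
          funext i
          simp only [Pi.add_apply]
          have : ∀ a b : ZMod 2, (a + b) + a = b := by decide
          exact this _ _
        have := (hcond2 h₂ hm2 h₃ h₃m h23 v₁ (v₁ + v₂)).1
        rw [hsum, hv] at this
        exact this E

lemma memlem {m : ℕ} (f g : (Fin m → ZMod 2) → ZMod 2) (u r : ZMod 2) :
    (fun x => u * f x + r * g x) = (0 : (Fin m → ZMod 2) → ZMod 2)
      ∨ (fun x => u * f x + r * g x) ∈ ({f, g, f + g} : Set ((Fin m → ZMod 2) → ZMod 2)) := by
  have hu : u = 0 ∨ u = 1 := by revert u; decide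
  have hr : r = 0 ∨ r = 1 := by revert r; decide
  rcases hu with rfl | rfl <;> rcases hr with rfl | rfl
  · left; funext x; simp
  · right
    have : (fun x => (0 : ZMod 2) * f x + 1 * g x) = g := funext fun x => by simp
    rw [this]
    exact Set.mem_insert_of_mem _ (Set.mem_insert _ _)
  · right
    have : (fun x => (1 : ZMod 2) * f x + 0 * g x) = f := funext fun x => by simp
    rw [this]
    exact Set.mem_insert _ _
  · right
    have : (fun x => (1 : ZMod 2) * f x + 1 * g x) = f + g := funext fun x => by simp
    rw [this]
    exact Set.mem_insert_of_mem _ (Set.mem_insert_of_mem _ rfl)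

theorem stmt_18 (m : ℕ) (f g : (Fin m → ZMod 2) → ZMod 2)
    (hf0 : f 0 = 0) (hg0 : g 0 = 0)
    (hf : ∀ a : Fin m → ZMod 2, f ≠ fun x => ip a x)
    (hg : ∀ b : Fin m → ZMod 2, g ≠ fun x => ip b x)
    (hfg : ∀ e : Fin m → ZMod 2, (f + g) ≠ fun x => ip e x)
    (hcond1 : ∀ f₁ ∈ ({f, g, f + g} : Set ((Fin m → ZMod 2) → ZMod 2)),
      ∀ f₂ ∈ ({f, g, f + g} : Set ((Fin m → ZMod 2) → ZMod 2)),
      ∀ h l : Fin m → ZMod 2, h ≠ l →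
        walshS f₁ h + walshS f₂ l ≠ 2 ^ m ∧ walshS f₁ h - walshS f₂ l ≠ 2 ^ m)
    (hcond2 : ∀ f₁ ∈ ({f, g, f + g} : Set ((Fin m → ZMod 2) → ZMod 2)),
      ∀ f₂ ∈ ({f, g, f + g} : Set ((Fin m → ZMod 2) → ZMod 2)), f₁ ≠ f₂ →
      ∀ h l : Fin m → ZMod 2,
        walshS f₁ (l + h) + walshS f₂ l - walshS (f₁ + f₂) h ≠ 2 ^ m ∧
        walshS f₁ (l + h) + walshS f₂ h - walshS (f₁ + f₂) l ≠ 2 ^ m) :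
    ∀ c ∈ codeFG f g, c ≠ 0 → ∀ c' ∈ codeFG f g, c' ≠ 0 →
      (∀ x, c' x ≠ 0 → c x ≠ 0) → c' = c := by
  intro c hc hc0 c' hc' hc0' hcov
  by_contra hne
  obtain ⟨u₁, r₁, v₁, rfl⟩ := hc
  obtain ⟨u₂, r₂, v₂, rfl⟩ := hc'
  have hzf : (fun x => ip (0 : Fin m → ZMod 2) x) = (0 : (Fin m → ZMod 2) → ZMod 2) :=
    funext fun x => ip_zero_left x
  have hfne : f ≠ 0 := fun h => hf 0 (h.trans hzf.symm)
  have hgne : g ≠ 0 := fun h => hg 0 (h.trans hzf.symm)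
  have hfgne : f + g ≠ 0 := fun h => hfg 0 (h.trans hzf.symm)
  set h₁ : (Fin m → ZMod 2) → ZMod 2 := fun x => u₁ * f x + r₁ * g x with hh₁
  set h₂ : (Fin m → ZMod 2) → ZMod 2 := fun x => u₂ * f x + r₂ * g x with hh₂
  set h₃ : (Fin m → ZMod 2) → ZMod 2 := fun x => (u₁ + u₂) * f x + (r₁ + r₂) * g x with hh₃
  have h₁0 : h₁ 0 = 0 := by simp [hh₁, hf0, hg0]
  have h₂0 : h₂ 0 = 0 := by simp [hh₂, hf0, hg0]
  have h3d : ∀ x, h₃ x = h₁ x + h₂ x := fun x => by simp only [hh₁, hh₂, hh₃]; ring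
  have hc1 : ∃ x, h₁ x + ip v₁ x ≠ 0 := by
    obtain ⟨x, hx⟩ := Function.ne_iff.1 hc0
    exact ⟨x.1, by simpa using hx⟩
  have hc2 : ∃ x, h₂ x + ip v₂ x ≠ 0 := by
    obtain ⟨x, hx⟩ := Function.ne_iff.1 hc0'
    exact ⟨x.1, by simpa using hx⟩
  have hc12 : ∃ x, h₂ x + ip v₂ x ≠ h₁ x + ip v₁ x := by
    obtain ⟨x, hx⟩ := Function.ne_iff.1 hne
    exact ⟨x.1, by simpa using hx⟩
  have hs : ∀ x, x ≠ 0 → h₂ x + ip v₂ x ≠ 0 → h₁ x + ip v₁ x ≠ 0 := by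
    intro x hx hval
    have := hcov ⟨x, hx⟩ (by simpa using hval)
    simpa using this
  exact core f g hfne hgne hfgne hcond1 hcond2 h₁ h₂ h₃ v₁ v₂
    (memlem f g u₁ r₁) (memlem f g u₂ r₂) (memlem f g (u₁ + u₂) (r₁ + r₂))
    h₁0 h₂0 h3d hc1 hc2 hc12 hs
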